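/- Let G be a countable discrete group acting continuously on a compact metric space (X,d) and let {F_n} be a sequence of finite subsets of G satisfying lim_{n→∞} |F_n|/log n = ∞. Then for any Z ⊆ X and any s, ε, δ > 0, there exists N₀ ∈ ℕ such that for all N ≥ N₀, M(Z,N,6ε,s+δ,{F_n}) ≤ W(Z,N,ε,s,{F_n}). -/

import Mathlib

open Filter Set MeasureTheory Topology ENNReal Pointwise

variable {G X : Type*}

section Defs

variable [Group G] [MetricSpace X] [MulAction G X]

/-- The Bowen ball `B_F(x,ε) = {y : d(gx,gy) < ε for all g ∈ F}`. -/
def bowenBall (F : Finset G) (x : X) (ε : ℝ) : Set X :=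
  {y : X | ∀ g ∈ F, dist (g • x) (g • y) < ε}

/-- A Følner sequence: `|F_n ∆ gF_n|/|F_n| → 0` for every `g ∈ G`. -/
def IsFolnerSeq (F : ℕ → Finset G) : Prop :=
  ∀ g : G, Tendsto
    (fun n => ((symmDiff (F n : Set G) ((g * ·) '' (F n : Set G))).ncard : ℝ) / (F n).card)
    atTop (𝓝 0)

/-- A tempered sequence: `|⋃_{k<n} F_k⁻¹ F_n| ≤ C |F_n|` for all `n`. -/
def IsTemperedSeq (F : ℕ → Finset G) : Prop :=
  ∃ C : ℝ, 0 < C ∧ ∀ n : ℕ,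
    ((⋃ k ∈ Finset.range n, ((F k : Set G)⁻¹ * (F n : Set G))).ncard : ℝ) ≤ C * (F n).card

/-- The growth condition `lim_n |F_n| / log n = ∞`. -/
def GrowthCond (F : ℕ → Finset G) : Prop :=
  Tendsto (fun n : ℕ => ((F n).card : ℝ) / Real.log n) atTop atTop

/-- `M(Z,N,ε,s,{F_n})`: infimum of `∑ exp(-s |F_{n_i}|)` over countable families of Bowen
balls `B_{F_{n_i}}(x_i,ε)`, `n_i ≥ N`, covering `Z`. -/
noncomputable def ballM (F : ℕ → Finset G) (Z : Set X) (N : ℕ) (ε s : ℝ) : ℝ≥0∞ :=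
  ⨅ (I : Set (X × ℕ)) (_ : I.Countable) (_ : ∀ p ∈ I, N ≤ p.2)
    (_ : Z ⊆ ⋃ p ∈ I, bowenBall (F p.2) p.1 ε),
    ∑' p : I, ENNReal.ofReal (Real.exp (-s * ((F (p : X × ℕ).2).card : ℝ)))

/-- `M(Z,ε,s,{F_n}) = lim_{N→∞} M(Z,N,ε,s,{F_n})` (the quantity is nondecreasing in `N`). -/
noncomputable def ballMN (F : ℕ → Finset G) (Z : Set X) (ε s : ℝ) : ℝ≥0∞ :=
  ⨆ N : ℕ, ballM F Z N ε s

/-- `M(Z,s,{F_n}) = lim_{ε→0} M(Z,ε,s,{F_n})` (the quantity is nondecreasing as `ε` decreases). -/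
noncomputable def ballMtot (F : ℕ → Finset G) (Z : Set X) (s : ℝ) : ℝ≥0∞ :=
  ⨆ (ε : ℝ) (_ : 0 < ε), ballMN F Z ε s

/-- The Bowen topological entropy of `Z` along `{F_n}`: the critical value of `s` at which
`M(Z,s,{F_n})` jumps from `+∞` to `0`, i.e. `inf {s : M(Z,s,{F_n}) = 0}`. -/
noncomputable def bowenEnt (F : ℕ → Finset G) (Z : Set X) : ℝ≥0∞ :=
  ⨅ (s : ℝ) (_ : ballMtot F Z s = 0), ENNReal.ofReal s

/-- The weighted quantity `W(f,N,ε,s,{F_n})`. -/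
noncomputable def wtW (F : ℕ → Finset G) (f : X → ℝ≥0∞) (N : ℕ) (ε s : ℝ) : ℝ≥0∞ :=
  ⨅ (I : Set (X × ℕ)) (c : X × ℕ → ℝ≥0∞) (_ : I.Countable)
    (_ : ∀ p ∈ I, N ≤ p.2 ∧ 0 < c p ∧ c p < ⊤)
    (_ : ∀ x : X, f x ≤ ∑' p : I, c (p : X × ℕ) *
        (bowenBall (F (p : X × ℕ).2) (p : X × ℕ).1 ε).indicator (fun _ => (1 : ℝ≥0∞)) x),
    ∑' p : I, c (p : X × ℕ) * ENNReal.ofReal (Real.exp (-s * ((F (p : X × ℕ).2).card : ℝ)))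

/-- `W(Z,N,ε,s,{F_n}) = W(χ_Z,N,ε,s,{F_n})`. -/
noncomputable def wtWset (F : ℕ → Finset G) (Z : Set X) (N : ℕ) (ε s : ℝ) : ℝ≥0∞ :=
  wtW F (Z.indicator fun _ => (1 : ℝ≥0∞)) N ε s

/-- `W(Z,ε,s,{F_n}) = lim_{N→∞} W(Z,N,ε,s,{F_n})`. -/
noncomputable def wtWN (F : ℕ → Finset G) (Z : Set X) (ε s : ℝ) : ℝ≥0∞ :=
  ⨆ N : ℕ, wtWset F Z N ε s

/-- `W(Z,s,{F_n}) = lim_{ε→0} W(Z,ε,s,{F_n})`. -/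
noncomputable def wtWtot (F : ℕ → Finset G) (Z : Set X) (s : ℝ) : ℝ≥0∞ :=
  ⨆ (ε : ℝ) (_ : 0 < ε), wtWN F Z ε s

/-- The weighted Bowen topological entropy of `Z` along `{F_n}`. -/
noncomputable def wtBowenEnt (F : ℕ → Finset G) (Z : Set X) : ℝ≥0∞ :=
  ⨅ (s : ℝ) (_ : wtWtot F Z s = 0), ENNReal.ofReal s

/-- A finite open cover of `X`. -/
def IsFinOpenCover (𝒰 : Finset (Set X)) : Prop :=
  (∀ U ∈ 𝒰, IsOpen U) ∧ ⋃₀ (𝒰 : Set (Set X)) = Set.univ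

/-- `N(⋁_{g∈F} g⁻¹𝒰)`: the minimal cardinality of a subcover of the refined cover, whose members
are the sets `X(𝐔) = ⋂_{g∈F} g⁻¹ U_g` with `U_g ∈ 𝒰`. -/
noncomputable def coverNum (𝒰 : Finset (Set X)) (F : Finset G) : ℕ :=
  sInf {k : ℕ | ∃ Λ : Finset (G → Set X), Λ.card = k ∧
    (∀ u ∈ Λ, ∀ g ∈ F, u g ∈ 𝒰) ∧
    (⋃ u ∈ Λ, ⋂ g ∈ F, (fun y => g • y) ⁻¹' u g) = Set.univ}

/-- `h_top(G,𝒰) = lim_n (1/|F_n|) log N(⋁_{g∈F_n} g⁻¹𝒰)` (the limit exists by Ornstein–Weiss,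
hence equals the `limsup`). -/
noncomputable def coverTopEnt (F : ℕ → Finset G) (𝒰 : Finset (Set X)) : ℝ :=
  limsup (fun n => Real.log (coverNum 𝒰 (F n)) / (F n).card) atTop

/-- The topological entropy `h_top(X,G)`, the supremum over finite open covers. -/
noncomputable def topEnt (X : Type*) [MetricSpace X] [MulAction G X] (F : ℕ → Finset G) : ℝ≥0∞ :=
  ⨆ (𝒰 : Finset (Set X)) (_ : IsFinOpenCover 𝒰), ENNReal.ofReal (coverTopEnt F 𝒰)

/-- `M(Z,𝒰,N,s,{F_n})`: infimum of `∑_{𝐔∈Λ} exp(-s m(𝐔))` over collections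
`Λ ⊆ ⋃_{j≥N} 𝒲_{F_j}(𝒰)` covering `Z`; an element `𝐔 ∈ 𝒲_{F_j}(𝒰)` is encoded as a pair
`(j, u)` with `u g ∈ 𝒰` for `g ∈ F_j` (and `u g = ∅` elsewhere), `X(𝐔) = ⋂_{g∈F_j} g⁻¹ (u g)`
and `m(𝐔) = |F_j|`. -/
noncomputable def covM (F : ℕ → Finset G) (𝒰 : Finset (Set X)) (Z : Set X) (N : ℕ) (s : ℝ) :
    ℝ≥0∞ :=
  ⨅ (Λ : Set (ℕ × (G → Set X)))
    (_ : ∀ p ∈ Λ, N ≤ p.1 ∧ (∀ g ∈ F p.1, p.2 g ∈ 𝒰) ∧ (∀ g ∉ F p.1, p.2 g = ∅))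
    (_ : Z ⊆ ⋃ p ∈ Λ, ⋂ g ∈ F p.1, (fun y => g • y) ⁻¹' p.2 g),
    ∑' p : Λ, ENNReal.ofReal (Real.exp (-s * ((F (p : ℕ × (G → Set X)).1).card : ℝ)))

/-- `M(Z,𝒰,s,{F_n}) = lim_{N→∞} M(Z,𝒰,N,s,{F_n})`. -/
noncomputable def covMtot (F : ℕ → Finset G) (𝒰 : Finset (Set X)) (Z : Set X) (s : ℝ) : ℝ≥0∞ :=
  ⨆ N : ℕ, covM F 𝒰 Z N s

/-- The cover-based Bowen topological entropy `h^B_top(𝒰,Z,{F_n}) = inf {s : M(Z,𝒰,s,{F_n}) = 0}`. -/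
noncomputable def covBowenEnt (F : ℕ → Finset G) (𝒰 : Finset (Set X)) (Z : Set X) : ℝ≥0∞ :=
  ⨅ (s : ℝ) (_ : covMtot F 𝒰 Z s = 0), ENNReal.ofReal s

/-- `diam(𝒰) = max {diam U : U ∈ 𝒰}`. -/
noncomputable def coverDiam (𝒰 : Finset (Set X)) : ℝ≥0∞ :=
  ⨆ U ∈ 𝒰, EMetric.diam U

end Defs

section MeasureDefs

variable [Group G] [MetricSpace X] [MulAction G X] [MeasurableSpace X]

/-- The quantity `-(1/m) log μ(B)`, with value `+∞` when `μ B = 0`. -/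
noncomputable def locTerm (μ : Measure X) (B : Set X) (m : ℕ) : ℝ≥0∞ :=
  if μ B = 0 then ⊤ else ENNReal.ofReal (-(Real.log ((μ B).toReal)) / (m : ℝ))

/-- The lower local entropy `h̲_μ^{loc}(x,ε,{F_n}) = liminf_n -(1/|F_n|) log μ(B_{F_n}(x,ε))`. -/
noncomputable def lowLoc (μ : Measure X) (F : ℕ → Finset G) (x : X) (ε : ℝ) : ℝ≥0∞ :=
  liminf (fun n => locTerm μ (bowenBall (F n) x ε) (F n).card) atTop

/-- The upper local entropy `limsup_n -(1/|F_n|) log μ(B_{F_n}(x,ε))`. -/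
noncomputable def upLoc (μ : Measure X) (F : ℕ → Finset G) (x : X) (ε : ℝ) : ℝ≥0∞ :=
  limsup (fun n => locTerm μ (bowenBall (F n) x ε) (F n).card) atTop

/-- `h̲_μ^{loc}(x,{F_n}) = lim_{ε→0} h̲_μ^{loc}(x,ε,{F_n})` (a monotone limit, i.e. the
supremum over `ε > 0`). -/
noncomputable def lowLocPt (μ : Measure X) (F : ℕ → Finset G) (x : X) : ℝ≥0∞ :=
  ⨆ (ε : ℝ) (_ : 0 < ε), lowLoc μ F x ε

/-- `h̲_μ^{loc}({F_n}) = ∫_X h̲_μ^{loc}(x,{F_n}) dμ(x)`. -/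
noncomputable def lowLocEnt (μ : Measure X) (F : ℕ → Finset G) : ℝ≥0∞ :=
  ∫⁻ x, lowLocPt μ F x ∂μ

/-- A finite measurable partition of `X`, presented as `P : Fin k → Set X`. -/
def IsMeasPartition {k : ℕ} (P : Fin k → Set X) : Prop :=
  (∀ i, MeasurableSet (P i)) ∧ Pairwise (Function.onFun Disjoint P) ∧ (⋃ i, P i) = Set.univ

/-- The static entropy `H_μ(𝒫_F)` of the join `𝒫_F = ⋁_{g∈F} g⁻¹𝒫`; its atoms are the
nonempty sets `⋂_{g∈F} g⁻¹ P(u g)` (distinct choices `u` yield disjoint atoms, and empty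
atoms contribute `0`). -/
noncomputable def partH (μ : Measure X) {k : ℕ} (P : Fin k → Set X) (F : Finset G) : ℝ :=
  letI := Classical.decEq G
  ∑ u : (↥F → Fin k),
    Real.negMulLog ((μ (⋂ g : ↥F, (fun y => (g : G) • y) ⁻¹' P (u g))).toReal)

/-- `h_μ(G,𝒫) = liminf_n (1/|F_n|) H_μ(𝒫_{F_n})`. -/
noncomputable def partEnt (μ : Measure X) (F : ℕ → Finset G) {k : ℕ} (P : Fin k → Set X) : ℝ :=
  liminf (fun n => partH μ P (F n) / (F n).card) atTop

/-- The measure-theoretic entropy `h_μ(X,G) = sup_𝒫 h_μ(G,𝒫)` (it is independent of the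
Følner sequence used to compute it). -/
noncomputable def measEnt (μ : Measure X) (F : ℕ → Finset G) : ℝ≥0∞ :=
  ⨆ (k : ℕ) (P : Fin k → Set X) (_ : IsMeasPartition P), ENNReal.ofReal (partEnt μ F P)

/-- Ergodicity of the `G`-action w.r.t. `μ`. -/
def IsErgodicGAction (G : Type*) [Group G] [MulAction G X] (μ : Measure X) : Prop :=
  ∀ A : Set X, MeasurableSet A → (∀ g : G, (g • ·) ⁻¹' A = A) → μ A = 0 ∨ μ A = 1

end MeasureDefs

section AuxLemmas

variable [Group G] [MetricSpace X] [MulAction G X]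

lemma mem_bowenBall' {Fn : Finset G} {x y : X} {r : ℝ} :
    y ∈ bowenBall Fn x r ↔ ∀ g ∈ Fn, dist (g • x) (g • y) < r := Iff.rfl

lemma isOpen_bowenBall' [ContinuousConstSMul G X]
    (Fn : Finset G) (x : X) (r : ℝ) : IsOpen (bowenBall Fn x r) := by
  have h : bowenBall Fn x r = ⋂ g ∈ Fn, (fun y => g • y) ⁻¹' Metric.ball (g • x) r := by
    ext y
    simp [bowenBall, Metric.mem_ball, dist_comm]
  rw [h]
  exact isOpen_biInter_finset fun g _ => Metric.isOpen_ball.preimage (continuous_const_smul g)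

lemma exists_sep_cover' [CompactSpace X]
    [ContinuousConstSMul G X] (Fn : Finset G) {ε : ℝ} (hε : 0 < ε) (W : Set X) :
    ∃ E : Set X, E.Finite ∧ E ⊆ W ∧
      (∀ z ∈ E, ∀ z' ∈ E, z ≠ z' → z' ∉ bowenBall Fn z (2 * ε)) ∧
      W ⊆ ⋃ z ∈ E, bowenBall Fn z (2 * ε) := by
  set S : Set (Set X) :=
    {E | E ⊆ W ∧ ∀ z ∈ E, ∀ z' ∈ E, z ≠ z' → z' ∉ bowenBall Fn z (2 * ε)} with hS
  obtain ⟨E, hES, hmax⟩ : ∃ E, Maximal (· ∈ S) E := by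
    apply zorn_subset
    intro c hcS hchain
    refine ⟨⋃₀ c, ⟨sUnion_subset fun E hE => (hcS hE).1, ?_⟩, fun s hs => subset_sUnion_of_mem hs⟩
    intro z hz z' hz' hne
    obtain ⟨E1, hE1, hz1⟩ := hz
    obtain ⟨E2, hE2, hz2⟩ := hz'
    rcases eq_or_ne E1 E2 with rfl | hE12
    · exact (hcS hE1).2 z hz1 z' hz2 hne
    · rcases hchain.total hE1 hE2 with h | h
      · exact (hcS hE2).2 z (h hz1) z' hz2 hne
      · exact (hcS hE1).2 z hz1 z' (h hz2) hne
  have hsep := hES.2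
  have hEW := hES.1
  have hself : ∀ z : X, z ∈ bowenBall Fn z (2 * ε) := by
    intro z g _
    simpa [dist_self] using by positivity
  have hcov : W ⊆ ⋃ z ∈ E, bowenBall Fn z (2 * ε) := by
    intro x hx
    by_contra hxn
    have hxE : x ∉ E := fun hxE => hxn (mem_biUnion hxE (hself x))
    have hS' : insert x E ∈ S := by
      refine ⟨insert_subset hx hEW, ?_⟩
      intro z hz z' hz' hne
      rcases hz with rfl | hzE
      · rcases hz' with rfl | hz'E
        · exact absurd rfl hne
        · intro hmem
          refine hxn (mem_biUnion hz'E ?_)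
          intro g hg
          rw [dist_comm]
          exact hmem g hg
      · rcases hz' with rfl | hz'E
        · intro hmem
          exact hxn (mem_biUnion hzE hmem)
        · exact hsep z hzE z' hz'E hne
    have hsub := hmax hS' (subset_insert x E)
    exact hxE (hsub (mem_insert x E))
  obtain ⟨T, hT⟩ := isCompact_univ.elim_finite_subcover (fun y : X => bowenBall Fn y ε)
    (fun y => isOpen_bowenBall' Fn y ε)
    (fun y _ => mem_iUnion.2 ⟨y, fun g _ => by simpa [dist_self] using hε⟩)
  have hEfin : E.Finite := by
    have hsub2 : E ⊆ ⋃ y ∈ T, (E ∩ bowenBall Fn y ε) := by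
      intro z hz
      obtain ⟨y, hyT, hzy⟩ := mem_iUnion₂.mp (hT (mem_univ z))
      exact mem_biUnion hyT ⟨hz, hzy⟩
    refine Set.Finite.subset (Set.Finite.biUnion T.finite_toSet fun y _ => ?_) hsub2
    refine Set.Subsingleton.finite ?_
    rintro z ⟨hzE, hzy⟩ z' ⟨hz'E, hz'y⟩
    by_contra hne
    refine hsep z hzE z' hz'E hne ?_
    intro g hg
    have d1 := hzy g hg
    have d2 := hz'y g hg
    have := dist_triangle (g • z) (g • y) (g • z')
    rw [dist_comm (g • z) (g • y)] at this
    linarith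
  exact ⟨E, hEfin, hEW, hsep, hcov⟩

end AuxLemmas

/-- If `lim_n |F_n|/log n = ∞` then for any `Z ⊆ X` and any `s, ε, δ > 0`
there is `N₀` such that for all `N ≥ N₀`, `M(Z,N,6ε,s+δ,{F_n}) ≤ W(Z,N,ε,s,{F_n})`. -/
theorem ballM_le_wtWset
    [Group G] [Countable G] [MetricSpace X] [CompactSpace X]
    [MulAction G X] [ContinuousConstSMul G X]
    (F : ℕ → Finset G) (hGrow : GrowthCond F)
    (Z : Set X) (s ε δ : ℝ) (hs : 0 < s) (hε : 0 < ε) (hδ : 0 < δ) :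
    ∃ N₀ : ℕ, ∀ N ≥ N₀, ballM F Z N (6 * ε) (s + δ) ≤ wtWset F Z N ε s := by
  classical
  set τ : ℕ → ℝ := fun n => Real.exp (-(δ/2) * ((F n).card : ℝ)) with hτdef
  have hτpos : ∀ n, 0 < τ n := fun n => Real.exp_pos _
  -- summability of τ
  have hb : Summable (fun n : ℕ => ((n:ℝ)^2)⁻¹) := by
    simpa [one_div] using Real.summable_one_div_nat_pow.2 one_lt_two
  have hbound : ∀ᶠ n : ℕ in atTop, τ n ≤ ((n:ℝ)^2)⁻¹ := by
    filter_upwards [hGrow.eventually_ge_atTop (4/δ), eventually_ge_atTop 2] with n h1 h2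
    have hn1 : (1:ℝ) < (n:ℝ) := by exact_mod_cast h2
    have hL : 0 < Real.log n := Real.log_pos hn1
    have hmn : (4/δ) * Real.log n ≤ ((F n).card : ℝ) := (le_div_iff₀ hL).mp h1
    have h2' : 2 * Real.log n ≤ (δ/2) * ((F n).card : ℝ) := by
      have hstep := mul_le_mul_of_nonneg_left hmn (by positivity : (0:ℝ) ≤ δ/2)
      have heq : (δ/2) * ((4/δ) * Real.log n) = 2 * Real.log n := by
        field_simp
        ring
      linarith [heq ▸ hstep]
    have hexp : τ n ≤ Real.exp (-(2 * Real.log n)) := by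
      rw [hτdef]
      exact Real.exp_le_exp.2 (by nlinarith)
    refine hexp.trans (le_of_eq ?_)
    have hn0 : (0:ℝ) < n := lt_trans one_pos hn1
    rw [show (2:ℝ) * Real.log n = Real.log n + Real.log n by ring, Real.exp_neg, Real.exp_add,
      Real.exp_log hn0, pow_two]
  obtain ⟨M, hM⟩ := eventually_atTop.mp hbound
  have hb2 : Summable (fun k : ℕ => ((((k + M : ℕ)) : ℝ)^2)⁻¹) :=
    (summable_nat_add_iff (f := fun n : ℕ => ((n:ℝ)^2)⁻¹) M).2 hb
  have hsummable : Summable τ :=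
    (summable_nat_add_iff (f := τ) M).mp
      (Summable.of_nonneg_of_le (fun k => (hτpos _).le)
        (fun k => hM (k + M) (Nat.le_add_left M k)) hb2)
  set Sr : ℝ := ∑' n, τ n with hSr
  have hSpos : 0 < Sr := Summable.tsum_pos hsummable (fun n => (hτpos n).le) 0 (hτpos 0)
  set K : ℝ := 2 * Sr with hK
  have hKpos : 0 < K := by positivity
  set t : ℕ → ℝ≥0∞ := fun n => ENNReal.ofReal (τ n / K) with ht
  have htsum : ∑' n, t n = ENNReal.ofReal (1/2) := by
    rw [ht]
    rw [← ENNReal.ofReal_tsum_of_nonneg (fun n => by positivity) (hsummable.div_const K)]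
    congr 1
    rw [tsum_div_const, hK]
    rw [← hSr]
    field_simp
  -- choice of N₀
  have hev : ∀ᶠ n in atTop, K * τ n ≤ 1 := by
    have h0 : Tendsto (fun n => K * τ n) atTop (𝓝 (K * 0)) :=
      (hsummable.tendsto_atTop_zero).const_mul K
    rw [mul_zero] at h0
    exact (h0.eventually_lt_const one_pos).mono fun n h => h.le
  obtain ⟨N₀, hN₀⟩ := eventually_atTop.mp hev
  refine ⟨N₀, fun N hN => ?_⟩
  rw [wtWset, wtW]
  refine le_iInf fun I => le_iInf fun c => le_iInf fun hIc => le_iInf fun hIprop =>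
    le_iInf fun hIcov => ?_
  -- the weight function
  set v : X × ℕ → X → ℝ≥0∞ :=
    fun p x => if p ∈ I ∧ x ∈ bowenBall (F p.2) p.1 ε then c p else 0 with hv
  have hA : ∀ x ∈ Z, (1:ℝ≥0∞) ≤ ∑' n : ℕ, ∑' y : X, v (y, n) x := by
    intro x hx
    have h1 := hIcov x
    rw [Set.indicator_of_mem hx] at h1
    have h2 : (∑' p : I, c p * (bowenBall (F (p : X × ℕ).2) (p : X × ℕ).1 ε).indicator
        (fun _ => (1:ℝ≥0∞)) x) = ∑' p : X × ℕ, v p x := by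
      rw [tsum_subtype I (fun p => c p * (bowenBall (F p.2) p.1 ε).indicator
        (fun _ => (1:ℝ≥0∞)) x)]
      refine tsum_congr fun p => ?_
      by_cases hp : p ∈ I
      · rw [Set.indicator_of_mem hp]
        by_cases hbx : x ∈ bowenBall (F p.2) p.1 ε
        · rw [Set.indicator_of_mem hbx, hv]
          simp [hp, hbx]
        · rw [Set.indicator_of_notMem hbx, hv]
          simp [hp, hbx]
      · rw [Set.indicator_of_notMem hp, hv]
        simp [hp]
    calc (1:ℝ≥0∞) ≤ _ := h1
    _ = ∑' p : X × ℕ, v p x := h2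
    _ = ∑' y : X, ∑' n : ℕ, v (y, n) x := ENNReal.tsum_prod'
    _ = ∑' n : ℕ, ∑' y : X, v (y, n) x := ENNReal.tsum_comm
  have hchoice : ∀ x ∈ Z, ∃ n : ℕ, N ≤ n ∧ t n < ∑' y : X, v (y, n) x := by
    intro x hx
    by_contra hcon
    push_neg at hcon
    have hle : ∀ n : ℕ, (∑' y : X, v (y, n) x) ≤ t n := by
      intro n
      rcases le_or_gt N n with h | h
      · exact hcon n h
      · have hz : ∀ y : X, v (y, n) x = 0 := by
          intro y
          rw [hv]
          by_cases hyI : (y, n) ∈ I ∧ x ∈ bowenBall (F (y, n).2) (y, n).1 ε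
          · exact absurd ((hIprop _ hyI.1).1) (by omega)
          · simp [hyI]
        calc (∑' y : X, v (y, n) x) = ∑' _ : X, (0:ℝ≥0∞) := tsum_congr hz
        _ = 0 := tsum_zero
        _ ≤ t n := zero_le
    have hub : (∑' n : ℕ, ∑' y : X, v (y, n) x) ≤ ∑' n, t n := ENNReal.tsum_le_tsum hle
    rw [htsum] at hub
    have h1 : (1:ℝ≥0∞) ≤ ENNReal.ofReal (1/2) := le_trans (hA x hx) hub
    have h2 : ENNReal.ofReal (1/2) < 1 := ENNReal.ofReal_lt_one.2 (by norm_num)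
    exact absurd h1 (not_le.2 h2)
  -- maximal separated sets
  have hEex : ∀ n : ℕ, ∃ E : Set X, E.Finite ∧
      E ⊆ {x | x ∈ Z ∧ t n < ∑' y : X, v (y, n) x} ∧
      (∀ z ∈ E, ∀ z' ∈ E, z ≠ z' → z' ∉ bowenBall (F n) z (2 * ε)) ∧
      {x | x ∈ Z ∧ t n < ∑' y : X, v (y, n) x} ⊆ ⋃ z ∈ E, bowenBall (F n) z (2 * ε) :=
    fun n => exists_sep_cover' (F n) hε _
  choose E hEfin hEsub hEsep hEcov using hEex
  set I' : Set (X × ℕ) := {p | N ≤ p.2 ∧ p.1 ∈ E p.2} with hI'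
  have hI'count : I'.Countable := by
    have hss : I' ⊆ ⋃ n : ℕ, (E n) ×ˢ ({n} : Set ℕ) := by
      rintro ⟨y, n⟩ ⟨-, hy⟩
      exact mem_iUnion.2 ⟨n, ⟨hy, rfl⟩⟩
    exact (Set.countable_iUnion fun n =>
      ((hEfin n).countable.prod (countable_singleton n))).mono hss
  have hI'N : ∀ p ∈ I', N ≤ p.2 := fun p hp => hp.1
  have hI'cov : Z ⊆ ⋃ p ∈ I', bowenBall (F p.2) p.1 (6 * ε) := by
    intro x hx
    obtain ⟨n, hNn, hlt⟩ := hchoice x hx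
    obtain ⟨z, hz, hxz⟩ := mem_iUnion₂.mp (hEcov n ⟨hx, hlt⟩)
    refine mem_biUnion (show (z, n) ∈ I' from ⟨hNn, hz⟩) ?_
    intro γ hγ
    have := hxz γ hγ
    linarith
  have hMle : ballM F Z N (6 * ε) (s + δ) ≤
      ∑' p : I', ENNReal.ofReal (Real.exp (-(s + δ) * ((F (p : X × ℕ).2).card : ℝ))) := by
    rw [ballM]
    exact iInf_le_of_le I' (iInf_le_of_le hI'count (iInf_le_of_le hI'N (iInf_le _ hI'cov)))
  refine hMle.trans ?_
  have hLdec : (∑' p : I', ENNReal.ofReal (Real.exp (-(s + δ) * ((F (p : X × ℕ).2).card : ℝ))))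
      = ∑' n : ℕ, ∑' y : X,
        I'.indicator (fun p => ENNReal.ofReal (Real.exp (-(s + δ) * ((F p.2).card : ℝ)))) (y, n) := by
    rw [tsum_subtype I' (fun p => ENNReal.ofReal (Real.exp (-(s + δ) * ((F p.2).card : ℝ)))),
      ENNReal.tsum_prod']
    exact ENNReal.tsum_comm
  have hRdec : (∑' p : I, c p * ENNReal.ofReal (Real.exp (-s * ((F (p : X × ℕ).2).card : ℝ))))
      = ∑' n : ℕ, ∑' y : X,
        I.indicator (fun p => c p * ENNReal.ofReal (Real.exp (-s * ((F p.2).card : ℝ)))) (y, n) := by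
    rw [tsum_subtype I (fun p => c p * ENNReal.ofReal (Real.exp (-s * ((F p.2).card : ℝ)))),
      ENNReal.tsum_prod']
    exact ENNReal.tsum_comm
  have hper : ∀ n : ℕ,
      (∑' y : X, I'.indicator
        (fun p => ENNReal.ofReal (Real.exp (-(s + δ) * ((F p.2).card : ℝ)))) (y, n))
      ≤ ∑' y : X, I.indicator
        (fun p => c p * ENNReal.ofReal (Real.exp (-s * ((F p.2).card : ℝ)))) (y, n) := by
    intro n
    rcases lt_or_ge n N with hn | hNn
    · have hz : ∀ y : X, I'.indicator
          (fun p => ENNReal.ofReal (Real.exp (-(s + δ) * ((F p.2).card : ℝ)))) (y, n) = 0 := by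
        intro y
        apply Set.indicator_of_notMem
        rintro ⟨h1, -⟩
        omega
      calc _ = ∑' _ : X, (0:ℝ≥0∞) := tsum_congr hz
      _ = 0 := tsum_zero
      _ ≤ _ := zero_le
    · -- main case
      have hNn₀ : N₀ ≤ n := le_trans hN hNn
      set fs := (hEfin n).toFinset with hfs
      set e₁ : ℝ≥0∞ := ENNReal.ofReal (Real.exp (-(s + δ) * ((F n).card : ℝ))) with he₁
      set e₂ : ℝ≥0∞ := ENNReal.ofReal (Real.exp (-s * ((F n).card : ℝ))) with he₂
      have hLn : (∑' y : X, I'.indicator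
          (fun p => ENNReal.ofReal (Real.exp (-(s + δ) * ((F p.2).card : ℝ)))) (y, n))
          = fs.card • e₁ := by
        rw [tsum_eq_sum (s := fs) (fun y hy => Set.indicator_of_notMem
          (fun hmem => hy ((hEfin n).mem_toFinset.mpr hmem.2)) _)]
        have hcg : ∀ y ∈ fs, I'.indicator
            (fun p => ENNReal.ofReal (Real.exp (-(s + δ) * ((F p.2).card : ℝ)))) (y, n) = e₁ :=
          fun y hy => Set.indicator_of_mem
            (show (y, n) ∈ I' from ⟨hNn, (hEfin n).mem_toFinset.mp hy⟩) _
        rw [Finset.sum_congr rfl hcg, Finset.sum_const]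
      have hRn : (∑' y : X, I.indicator
          (fun p => c p * ENNReal.ofReal (Real.exp (-s * ((F p.2).card : ℝ)))) (y, n))
          = (∑' y : X, (if (y, n) ∈ I then c (y, n) else 0)) * e₂ := by
        rw [← ENNReal.tsum_mul_right]
        refine tsum_congr fun y => ?_
        by_cases hyI : (y, n) ∈ I
        · rw [Set.indicator_of_mem hyI, if_pos hyI]
        · rw [Set.indicator_of_notMem hyI, if_neg hyI, zero_mul]
      have hkey : (fs.card : ℝ≥0∞) * t n ≤ ∑' y : X, (if (y, n) ∈ I then c (y, n) else 0) := by
        have h1 : ∀ z ∈ fs, t n ≤ ∑' y : X, v (y, n) z :=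
          fun z hz => le_of_lt (hEsub n ((hEfin n).mem_toFinset.mp hz)).2
        have h2 : fs.card • t n ≤ ∑ z ∈ fs, ∑' y : X, v (y, n) z :=
          Finset.card_nsmul_le_sum fs _ _ h1
        have h3 : (∑ z ∈ fs, ∑' y : X, v (y, n) z) = ∑' y : X, ∑ z ∈ fs, v (y, n) z :=
          (Summable.tsum_finsetSum (fun _ _ => ENNReal.summable)).symm
        have h4 : ∀ y : X, (∑ z ∈ fs, v (y, n) z) ≤ (if (y, n) ∈ I then c (y, n) else 0) := by
          intro y
          by_cases hy : ∃ z ∈ fs, v (y, n) z ≠ 0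
          · obtain ⟨z₀, hz₀, hvz₀⟩ := hy
            have hcond₀ : (y, n) ∈ I ∧ z₀ ∈ bowenBall (F n) y ε := by
              by_contra hc
              exact hvz₀ (if_neg hc)
            have hsum : (∑ z ∈ fs, v (y, n) z) = v (y, n) z₀ := by
              refine Finset.sum_eq_single_of_mem z₀ hz₀ (fun z hz hne => ?_)
              by_contra hvz
              have hcond : (y, n) ∈ I ∧ z ∈ bowenBall (F n) y ε := by
                by_contra hc
                exact hvz (if_neg hc)
              refine hEsep n z ((hEfin n).mem_toFinset.mp hz) z₀
                ((hEfin n).mem_toFinset.mp hz₀) hne ?_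
              intro γ hγ
              have d1 := hcond.2 γ hγ
              have d2 := hcond₀.2 γ hγ
              have htr := dist_triangle (γ • z) (γ • y) (γ • z₀)
              rw [dist_comm (γ • z) (γ • y)] at htr
              linarith
            rw [hsum, if_pos hcond₀.1]
            exact le_of_eq (if_pos hcond₀)
          · push_neg at hy
            rw [Finset.sum_eq_zero hy]
            exact zero_le
        calc (fs.card : ℝ≥0∞) * t n = fs.card • t n := (nsmul_eq_mul _ _).symm
        _ ≤ ∑ z ∈ fs, ∑' y : X, v (y, n) z := h2
        _ = ∑' y : X, ∑ z ∈ fs, v (y, n) z := h3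
        _ ≤ ∑' y : X, (if (y, n) ∈ I then c (y, n) else 0) := ENNReal.tsum_le_tsum h4
      have hreal : e₁ ≤ t n * e₂ := by
        rw [he₁, he₂, ht]
        rw [← ENNReal.ofReal_mul (by positivity)]
        apply ENNReal.ofReal_le_ofReal
        rw [div_mul_eq_mul_div, le_div_iff₀ hKpos]
        have hKle : K ≤ Real.exp ((δ/2) * ((F n).card : ℝ)) := by
          have h := hN₀ n hNn₀
          rw [hτdef] at h
          simp only [neg_mul] at h
          rw [Real.exp_neg, ← div_eq_mul_inv, div_le_one (Real.exp_pos _)] at h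
          exact h
        calc Real.exp (-(s + δ) * ((F n).card : ℝ)) * K
            ≤ Real.exp (-(s + δ) * ((F n).card : ℝ)) * Real.exp ((δ/2) * ((F n).card : ℝ)) :=
          mul_le_mul_of_nonneg_left hKle (Real.exp_pos _).le
        _ = Real.exp (-(δ/2) * ((F n).card : ℝ)) * Real.exp (-s * ((F n).card : ℝ)) := by
          rw [← Real.exp_add, ← Real.exp_add]
          congr 1
          ring
      rw [hLn, hRn]
      calc fs.card • e₁ = (fs.card : ℝ≥0∞) * e₁ := nsmul_eq_mul _ _
      _ ≤ (fs.card : ℝ≥0∞) * (t n * e₂) := mul_le_mul_right hreal _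
      _ = ((fs.card : ℝ≥0∞) * t n) * e₂ := (mul_assoc _ _ _).symm
      _ ≤ (∑' y : X, (if (y, n) ∈ I then c (y, n) else 0)) * e₂ := mul_le_mul_left hkey _
  calc (∑' p : I', ENNReal.ofReal (Real.exp (-(s + δ) * ((F (p : X × ℕ).2).card : ℝ))))
      = _ := hLdec
  _ ≤ _ := ENNReal.tsum_le_tsum hper
  _ = ∑' p : I, c p * ENNReal.ofReal (Real.exp (-s * ((F (p : X × ℕ).2).card : ℝ))) := hRdec.symm
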